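/- Let n ≥ 1 and γ ∈ ℝ, let U ⊆ ℝⁿ be open, and let v : ℝⁿ → ℝ be three times continuously differentiable, strictly positive on U, and satisfy Δv = (n/2)·|Dv|²/v on U. Then the pointwise inequality (divervgammaS2vi) holds on U: div( v^γ·S²_{ij}(D²v)·∂_i v ) + (γ/2)·div( v^{γ−1}·|Dv|²·Dv ) ≤ |Dv|⁴·v^{γ−2}·( (n(n−1))/4 − (γ/2)(1−γ) + (3γn)/4 ). -/

import Mathlib

/-- Partial derivative `∂_i f` of a function on `ℝⁿ`. -/
noncomputable def pd {n : ℕ} (i : Fin n) (f : (Fin n → ℝ) → ℝ) (x : Fin n → ℝ) : ℝ :=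
  fderiv ℝ f x (Pi.single i 1)

/-- Laplacian `Δf = ∑ᵢ ∂ᵢᵢ f`. -/
noncomputable def lap {n : ℕ} (f : (Fin n → ℝ) → ℝ) (x : Fin n → ℝ) : ℝ :=
  ∑ i, pd i (pd i f) x

/-- `S²_{ij}(D²v) = (Δv)·δ_{ij} − ∂_{ij}v`. -/
noncomputable def S2ij {n : ℕ} (v : (Fin n → ℝ) → ℝ) (i j : Fin n) (x : Fin n → ℝ) : ℝ :=
  lap v x * (if i = j then 1 else 0) - pd j (pd i v) x

/-- `|Df|² = ∑ᵢ (∂ᵢf)²`. -/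
noncomputable def gradSq {n : ℕ} (f : (Fin n → ℝ) → ℝ) (x : Fin n → ℝ) : ℝ :=
  ∑ i, (pd i f x) ^ 2

section Helpers

variable {n : ℕ} {f g : (Fin n → ℝ) → ℝ} {x : Fin n → ℝ} {i j : Fin n}

lemma pd_congr (h : f =ᶠ[nhds x] g) : pd i f x = pd i g x := by
  rw [pd, pd, h.fderiv_eq]

lemma pd_mul (hf : DifferentiableAt ℝ f x) (hg : DifferentiableAt ℝ g x) :
    pd i (fun y => f y * g y) x = pd i f x * g x + f x * pd i g x := by
  rw [pd, (hf.hasFDerivAt.fun_mul hg.hasFDerivAt).fderiv]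
  simp [pd]; ring

lemma pd_sub (hf : DifferentiableAt ℝ f x) (hg : DifferentiableAt ℝ g x) :
    pd i (fun y => f y - g y) x = pd i f x - pd i g x := by
  rw [pd, fderiv_fun_sub hf hg]; simp [pd]

lemma pd_mul_const (hf : DifferentiableAt ℝ f x) (c : ℝ) :
    pd i (fun y => f y * c) x = pd i f x * c := by
  rw [pd, fderiv_mul_const hf]; simp [pd]; ring

lemma pd_sum {ι : Type*} (s : Finset ι) (F : ι → (Fin n → ℝ) → ℝ)
    (hF : ∀ k ∈ s, DifferentiableAt ℝ (F k) x) :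
    pd i (fun y => ∑ k ∈ s, F k y) x = ∑ k ∈ s, pd i (F k) x := by
  rw [pd, fderiv_fun_sum hF]; simp [pd]

lemma pd_rpow (γ : ℝ) (hf : DifferentiableAt ℝ f x) (hfx : f x ≠ 0) :
    pd i (fun y => f y ^ γ) x = γ * f x ^ (γ - 1) * pd i f x := by
  rw [pd, (hf.hasFDerivAt.rpow_const (Or.inl hfx)).fderiv]
  simp [pd]

lemma pd_sq (hf : DifferentiableAt ℝ f x) :
    pd i (fun y => f y ^ 2) x = 2 * f x * pd i f x := by
  have : (fun y => f y ^ 2) = fun y => f y * f y := by funext y; ring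
  rw [this, pd_mul hf hf]; ring

lemma contDiffAt_pd {m : ℕ} (hf : ContDiffAt ℝ (m + 1) f x) :
    ContDiffAt ℝ m (pd i f) x := by
  have h1 : ContDiffAt ℝ m (fderiv ℝ f) x := hf.fderiv_right (by exact_mod_cast le_rfl)
  exact h1.clm_apply contDiffAt_const

lemma pd_pd_eq (hd : DifferentiableAt ℝ (fderiv ℝ f) x) :
    pd j (pd i f) x = fderiv ℝ (fderiv ℝ f) x (Pi.single j 1) (Pi.single i 1) := by
  have h := hd.hasFDerivAt.clm_apply (hasFDerivAt_const (Pi.single i (1:ℝ)) x)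
  have e : pd i f = fun y => (fderiv ℝ f y) (Pi.single i 1) := rfl
  simp only [pd, e]
  rw [h.fderiv]
  simp

lemma pd_comm (hf : ContDiffAt ℝ 2 f x) : pd j (pd i f) x = pd i (pd j f) x := by
  have hd : DifferentiableAt ℝ (fderiv ℝ f) x := by
    have : ContDiffAt ℝ 1 (fderiv ℝ f) x := hf.fderiv_right (by exact_mod_cast le_rfl)
    exact this.differentiableAt (by norm_num)
  rw [pd_pd_eq hd, pd_pd_eq hd]
  exact (hf.isSymmSndFDerivAt (by simp)) _ _


end Helpers

set_option maxHeartbeats 2000000 in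
/-- Inequality (divervgammaS2vi): if `v > 0` solves `Δv = (n/2)·|Dv|²/v` on `U`, then
`div(v^γ·S²_{ij}(D²v)·∂ᵢv) + (γ/2)·div(v^{γ−1}·|Dv|²·Dv)
  ≤ |Dv|⁴·v^{γ−2}·(n(n−1)/4 − (γ/2)(1−γ) + 3γn/4)` on `U`. -/
theorem stmt_8 (n : ℕ) (hn : 1 ≤ n) (γ : ℝ) (U : Set (Fin n → ℝ)) (hU : IsOpen U)
    (v : (Fin n → ℝ) → ℝ) (hv : ContDiffOn ℝ 3 v U) (hpos : ∀ x ∈ U, 0 < v x)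
    (hpde : ∀ x ∈ U, lap v x = ((n : ℝ) / 2) * gradSq v x / v x)
    (x : Fin n → ℝ) (hx : x ∈ U) :
    (∑ j, pd j (fun y => v y ^ γ * ∑ i, S2ij v i j y * pd i v y) x)
      + (γ / 2) * ∑ j, pd j (fun y => v y ^ (γ - 1) * gradSq v y * pd j v y) x
    ≤ (gradSq v x) ^ 2 * v x ^ (γ - 2)
        * ((n : ℝ) * ((n : ℝ) - 1) / 4 - (γ / 2) * (1 - γ) + 3 * γ * (n : ℝ) / 4) := by
  have hxU : U ∈ nhds x := hU.mem_nhds hx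
  have hv3 : ∀ y ∈ U, ContDiffAt ℝ 3 v y := fun y hy => hv.contDiffAt (hU.mem_nhds hy)
  have cd2 : ∀ (i : Fin n), ∀ y ∈ U, ContDiffAt ℝ 2 (pd i v) y := fun i y hy =>
    contDiffAt_pd (m := 2) (by exact_mod_cast hv3 y hy)
  have cd1 : ∀ (i j : Fin n), ∀ y ∈ U, ContDiffAt ℝ 1 (pd j (pd i v)) y := fun i j y hy =>
    contDiffAt_pd (m := 1) (by exact_mod_cast cd2 i y hy)
  have dv : ∀ y ∈ U, DifferentiableAt ℝ v y := fun y hy =>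
    (hv3 y hy).differentiableAt (by norm_num)
  have dpd : ∀ (i : Fin n), ∀ y ∈ U, DifferentiableAt ℝ (pd i v) y := fun i y hy =>
    (cd2 i y hy).differentiableAt (by norm_num)
  have dpd2 : ∀ (i j : Fin n), ∀ y ∈ U, DifferentiableAt ℝ (pd j (pd i v)) y := fun i j y hy =>
    (cd1 i j y hy).differentiableAt (by norm_num)
  have hlapfun : lap v = fun y => ∑ i, pd i (pd i v) y := rfl
  have dlap : ∀ y ∈ U, DifferentiableAt ℝ (lap v) y := fun y hy => by
    rw [hlapfun]; exact DifferentiableAt.fun_sum (fun i _ => dpd2 i i y hy)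
  have hS2fun : ∀ (i j : Fin n), S2ij v i j =
      fun y => lap v y * (if i = j then (1:ℝ) else 0) - pd j (pd i v) y := fun i j => rfl
  have dS2 : ∀ (i j : Fin n), ∀ y ∈ U, DifferentiableAt ℝ (S2ij v i j) y := fun i j y hy => by
    rw [hS2fun]; exact ((dlap y hy).mul_const _).sub (dpd2 i j y hy)
  have hgradfun : gradSq v = fun y => ∑ i, pd i v y ^ 2 := rfl
  have dgrad : ∀ y ∈ U, DifferentiableAt ℝ (gradSq v) y := fun y hy => by
    rw [hgradfun]; exact DifferentiableAt.fun_sum (fun i _ => (dpd i y hy).pow 2)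
  have symm2 : ∀ (i j : Fin n), ∀ y ∈ U, pd j (pd i v) y = pd i (pd j v) y := fun i j y hy =>
    pd_comm ((hv3 y hy).of_le (by norm_num))
  -- divergence-free
  have hdiv : ∀ i : Fin n, ∑ j, pd j (fun y => S2ij v i j y) x = 0 := by
    intro i
    have e1 : ∀ j : Fin n, pd j (fun y => S2ij v i j y) x
        = pd j (lap v) x * (if i = j then 1 else 0) - pd j (pd j (pd i v)) x := by
      intro j
      rw [show (fun y => S2ij v i j y)
          = fun y => lap v y * (if i = j then (1:ℝ) else 0) - pd j (pd i v) y from rfl,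
        pd_sub ((dlap x hx).mul_const _) (dpd2 i j x hx), pd_mul_const (dlap x hx)]
    have e2 : ∀ j : Fin n, pd j (pd j (pd i v)) x = pd i (pd j (pd j v)) x := by
      intro j
      have ev : (pd j (pd i v)) =ᶠ[nhds x] (pd i (pd j v)) :=
        Filter.eventuallyEq_of_mem hxU (fun y hy => symm2 i j y hy)
      calc pd j (pd j (pd i v)) x = pd j (pd i (pd j v)) x := pd_congr ev
        _ = pd i (pd j (pd j v)) x := pd_comm (cd2 j x hx)
    have e3 : pd i (lap v) x = ∑ j, pd i (pd j (pd j v)) x := by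
      rw [show lap v = fun y => ∑ j, pd j (pd j v) y from rfl,
        pd_sum _ _ (fun j _ => dpd2 j j x hx)]
    calc ∑ j, pd j (fun y => S2ij v i j y) x
        = ∑ j : Fin n, (pd j (lap v) x * (if i = j then 1 else 0)
            - pd i (pd j (pd j v)) x) := Finset.sum_congr rfl (fun j _ => by rw [e1 j, e2 j])
      _ = pd i (lap v) x - ∑ j, pd i (pd j (pd j v)) x := by
          rw [Finset.sum_sub_distrib]
          congr 1
          simp
      _ = 0 := by rw [e3]; ring
  have hvne : v x ≠ 0 := (hpos x hx).ne'
  have hT1 : ∀ j : Fin n, pd j (fun y => v y ^ γ * ∑ i, S2ij v i j y * pd i v y) x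
      = γ * v x ^ (γ - 1) * pd j v x * (∑ i, S2ij v i j x * pd i v x)
        + v x ^ γ * ∑ i, (pd j (fun y => S2ij v i j y) x * pd i v x
            + S2ij v i j x * pd j (pd i v) x) := by
    intro j
    have hfγ : DifferentiableAt ℝ (fun y => v y ^ γ) x := (dv x hx).rpow_const (Or.inl hvne)
    have hgd : ∀ i : Fin n, DifferentiableAt ℝ (fun y => S2ij v i j y * pd i v y) x :=
      fun i => (dS2 i j x hx).mul (dpd i x hx)
    have hg : DifferentiableAt ℝ (fun y => ∑ i, S2ij v i j y * pd i v y) x :=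
      DifferentiableAt.fun_sum (A := fun i y => S2ij v i j y * pd i v y) (fun i _ => hgd i)
    rw [pd_mul hfγ hg, pd_rpow γ (dv x hx) hvne, pd_sum _ _ (fun i _ => hgd i)]
    congr 1
    exact congrArg _ (Finset.sum_congr rfl fun k _ => pd_mul (dS2 k j x hx) (dpd k x hx))
  have hT2 : ∀ j : Fin n, pd j (fun y => v y ^ (γ - 1) * gradSq v y * pd j v y) x
      = ((γ - 1) * v x ^ (γ - 1 - 1) * pd j v x * gradSq v x
          + v x ^ (γ - 1) * (∑ i, 2 * pd i v x * pd j (pd i v) x)) * pd j v x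
        + v x ^ (γ - 1) * gradSq v x * pd j (pd j v) x := by
    intro j
    have hf1 : DifferentiableAt ℝ (fun y => v y ^ (γ - 1)) x :=
      (dv x hx).rpow_const (Or.inl hvne)
    have hf : DifferentiableAt ℝ (fun y => v y ^ (γ - 1) * gradSq v y) x :=
      hf1.mul (dgrad x hx)
    have hgr : pd j (gradSq v) x = ∑ i, 2 * pd i v x * pd j (pd i v) x := by
      rw [hgradfun, pd_sum _ (fun i y => pd i v y ^ 2) (fun i _ => (dpd i x hx).pow 2)]
      exact Finset.sum_congr rfl fun i _ => pd_sq (dpd i x hx)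
    rw [pd_mul hf (dpd j x hx), pd_mul hf1 (dgrad x hx), pd_rpow (γ-1) (dv x hx) hvne, hgr]
  have hzero : ∑ j : Fin n, ∑ i : Fin n, pd j (fun y => S2ij v i j y) x * pd i v x = 0 := by
    rw [Finset.sum_comm]
    calc ∑ i : Fin n, ∑ j : Fin n, pd j (fun y => S2ij v i j y) x * pd i v x
        = ∑ i : Fin n, (∑ j : Fin n, pd j (fun y => S2ij v i j y) x) * pd i v x := by
          exact Finset.sum_congr rfl fun i _ => (Finset.sum_mul _ _ _).symm
      _ = 0 := by simp [hdiv]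
  have hS_VV : ∑ j : Fin n, ∑ i : Fin n, S2ij v i j x * pd i v x * pd j v x
      = lap v x * gradSq v x
        - ∑ j : Fin n, ∑ i : Fin n, pd j (pd i v) x * pd i v x * pd j v x := by
    have e : ∀ (i j : Fin n), S2ij v i j x * pd i v x * pd j v x
        = (if i = j then lap v x * (pd i v x * pd j v x) else 0)
          - pd j (pd i v) x * pd i v x * pd j v x := by
      intro i j
      show (lap v x * (if i = j then 1 else 0) - pd j (pd i v) x) * pd i v x * pd j v x = _
      split_ifs <;> ring
    simp only [e, Finset.sum_sub_distrib]
    congr 1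
    simp only [Finset.sum_ite_eq', Finset.mem_univ, if_true]
    rw [gradSq, Finset.mul_sum]
    exact Finset.sum_congr rfl fun j _ => by ring
  have hS_H : ∑ j : Fin n, ∑ i : Fin n, S2ij v i j x * pd j (pd i v) x
      = lap v x * lap v x - ∑ j : Fin n, ∑ i : Fin n, (pd j (pd i v) x) ^ 2 := by
    have e : ∀ (i j : Fin n), S2ij v i j x * pd j (pd i v) x
        = (if i = j then lap v x * pd j (pd i v) x else 0) - (pd j (pd i v) x) ^ 2 := by
      intro i j
      show (lap v x * (if i = j then 1 else 0) - pd j (pd i v) x) * pd j (pd i v) x = _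
      split_ifs <;> ring
    simp only [e, Finset.sum_sub_distrib]
    congr 1
    simp only [Finset.sum_ite_eq', Finset.mem_univ, if_true]
    rw [lap, Finset.mul_sum]
  -- abbreviated atoms
  have hsum1 : (∑ j, pd j (fun y => v y ^ γ * ∑ i, S2ij v i j y * pd i v y) x)
      = γ * v x ^ (γ - 1) * (lap v x * gradSq v x
          - ∑ j : Fin n, ∑ i : Fin n, pd j (pd i v) x * pd i v x * pd j v x)
        + v x ^ γ * (lap v x * lap v x
          - ∑ j : Fin n, ∑ i : Fin n, (pd j (pd i v) x) ^ 2) := by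
    calc (∑ j, pd j (fun y => v y ^ γ * ∑ i, S2ij v i j y * pd i v y) x)
        = ∑ j : Fin n, (γ * v x ^ (γ - 1) * pd j v x * (∑ i, S2ij v i j x * pd i v x)
            + v x ^ γ * ∑ i, (pd j (fun y => S2ij v i j y) x * pd i v x
              + S2ij v i j x * pd j (pd i v) x)) :=
          Finset.sum_congr rfl fun j _ => hT1 j
      _ = γ * v x ^ (γ - 1) * (∑ j : Fin n, ∑ i : Fin n, S2ij v i j x * pd i v x * pd j v x)
          + v x ^ γ * ((∑ j : Fin n, ∑ i : Fin n, pd j (fun y => S2ij v i j y) x * pd i v x)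
            + (∑ j : Fin n, ∑ i : Fin n, S2ij v i j x * pd j (pd i v) x)) := by
          rw [Finset.sum_add_distrib]
          congr 1
          · rw [Finset.mul_sum]
            refine Finset.sum_congr rfl fun j _ => ?_
            have e := Finset.sum_mul Finset.univ (fun i => S2ij v i j x * pd i v x) (pd j v x)
            rw [← e]
            ring
          · rw [← Finset.mul_sum, ← Finset.sum_add_distrib]
            congr 1
            exact Finset.sum_congr rfl fun j _ => Finset.sum_add_distrib
      _ = _ := by rw [hzero, hS_VV, hS_H]; ring
  have hQQ : ∑ j : Fin n, pd j v x * pd j v x = gradSq v x := by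
    rw [gradSq]
    exact Finset.sum_congr rfl fun j _ => (sq (pd j v x)).symm
  have h2A : ∑ j : Fin n, ∑ i : Fin n, 2 * pd i v x * pd j (pd i v) x * pd j v x
      = 2 * ∑ j : Fin n, ∑ i : Fin n, pd j (pd i v) x * pd i v x * pd j v x := by
    rw [Finset.mul_sum]
    refine Finset.sum_congr rfl fun j _ => ?_
    rw [Finset.mul_sum]
    exact Finset.sum_congr rfl fun i _ => by ring
  have hsum2 : (∑ j, pd j (fun y => v y ^ (γ - 1) * gradSq v y * pd j v y) x)
      = (γ - 1) * v x ^ (γ - 1 - 1) * gradSq v x * gradSq v x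
        + v x ^ (γ - 1) * (2 * ∑ j : Fin n, ∑ i : Fin n, pd j (pd i v) x * pd i v x * pd j v x)
        + v x ^ (γ - 1) * gradSq v x * lap v x := by
    calc (∑ j, pd j (fun y => v y ^ (γ - 1) * gradSq v y * pd j v y) x)
        = ∑ j : Fin n, (((γ - 1) * v x ^ (γ - 1 - 1) * pd j v x * gradSq v x
            + v x ^ (γ - 1) * (∑ i, 2 * pd i v x * pd j (pd i v) x)) * pd j v x
          + v x ^ (γ - 1) * gradSq v x * pd j (pd j v) x) :=
          Finset.sum_congr rfl fun j _ => hT2 j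
      _ = ∑ j : Fin n, ((γ - 1) * v x ^ (γ - 1 - 1) * gradSq v x * (pd j v x * pd j v x)
            + v x ^ (γ - 1) * (∑ i : Fin n, 2 * pd i v x * pd j (pd i v) x * pd j v x)
            + v x ^ (γ - 1) * gradSq v x * pd j (pd j v) x) := by
          refine Finset.sum_congr rfl fun j _ => ?_
          have e := Finset.sum_mul Finset.univ (fun i => 2 * pd i v x * pd j (pd i v) x)
            (pd j v x)
          rw [← e]
          ring
      _ = (γ - 1) * v x ^ (γ - 1 - 1) * gradSq v x * (∑ j : Fin n, pd j v x * pd j v x)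
            + v x ^ (γ - 1) * (∑ j : Fin n, ∑ i : Fin n,
                2 * pd i v x * pd j (pd i v) x * pd j v x)
            + v x ^ (γ - 1) * gradSq v x * (∑ j : Fin n, pd j (pd j v) x) := by
          rw [Finset.sum_add_distrib, Finset.sum_add_distrib, ← Finset.mul_sum,
            ← Finset.mul_sum, ← Finset.mul_sum]
      _ = _ := by rw [hQQ, h2A, show (∑ j : Fin n, pd j (pd j v) x) = lap v x from rfl]
  -- Cauchy-Schwarz / Newton inequality
  have hkey : (lap v x) ^ 2 ≤ (n : ℝ) * ∑ j : Fin n, ∑ i : Fin n, (pd j (pd i v) x) ^ 2 := by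
    have h1 : (∑ j : Fin n, pd j (pd j v) x) ^ 2
        ≤ (n : ℝ) * ∑ j : Fin n, (pd j (pd j v) x) ^ 2 := by
      have := sq_sum_le_card_mul_sum_sq (s := (Finset.univ : Finset (Fin n)))
        (f := fun j => pd j (pd j v) x)
      simpa using this
    have h2 : ∑ j : Fin n, (pd j (pd j v) x) ^ 2
        ≤ ∑ j : Fin n, ∑ i : Fin n, (pd j (pd i v) x) ^ 2 :=
      Finset.sum_le_sum fun j _ =>
        Finset.single_le_sum (f := fun i => (pd j (pd i v) x) ^ 2)
          (fun i _ => sq_nonneg _) (Finset.mem_univ j)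
    calc (lap v x) ^ 2 = (∑ j : Fin n, pd j (pd j v) x) ^ 2 := by
          rw [show lap v x = ∑ j : Fin n, pd j (pd j v) x from rfl]
      _ ≤ (n : ℝ) * ∑ j : Fin n, (pd j (pd j v) x) ^ 2 := h1
      _ ≤ (n : ℝ) * ∑ j : Fin n, ∑ i : Fin n, (pd j (pd i v) x) ^ 2 := by
          exact mul_le_mul_of_nonneg_left h2 (by positivity)
  -- scalar endgame
  have hvx : 0 < v x := hpos x hx
  have hiv : v x * (v x)⁻¹ = 1 := mul_inv_cancel₀ hvne
  have hLQ : lap v x = (n : ℝ) / 2 * gradSq v x * (v x)⁻¹ := by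
    rw [hpde x hx, div_eq_mul_inv]
  have hP1 : v x ^ (γ - 1) = v x ^ γ * (v x)⁻¹ := by
    rw [Real.rpow_sub hvx, Real.rpow_one, div_eq_mul_inv]
  have hP2 : v x ^ (γ - 1 - 1) = v x ^ γ * (v x)⁻¹ * (v x)⁻¹ := by
    rw [Real.rpow_sub hvx, Real.rpow_one, div_eq_mul_inv, hP1]
  have hP2' : v x ^ (γ - 2) = v x ^ γ * (v x)⁻¹ * (v x)⁻¹ := by
    rw [show γ - 2 = γ - 1 - 1 by ring, hP2]
  have hPpos : 0 < v x ^ γ := Real.rpow_pos_of_pos hvx γ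
  set Q := gradSq v x with hQ'
  set A := ∑ j : Fin n, ∑ i : Fin n, pd j (pd i v) x * pd i v x * pd j v x with hA'
  set B := ∑ j : Fin n, ∑ i : Fin n, (pd j (pd i v) x) ^ 2 with hB'
  set P := v x ^ γ with hPdef
  set iv := (v x)⁻¹ with hivdef
  rw [hsum1, hsum2, hP1, hP2, hP2', hLQ]
  have hn1 : (1 : ℝ) ≤ (n : ℝ) := by exact_mod_cast hn
  have h5 : (n : ℝ) / 4 * (Q * iv) ^ 2 ≤ B := by
    have hk : ((n:ℝ) / 2 * Q * iv) ^ 2 ≤ (n : ℝ) * B := by rw [← hLQ]; exact hkey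
    nlinarith [hk, hn1, sq_nonneg (Q * iv)]
  have h6 : P * ((n : ℝ) / 4 * (Q * iv) ^ 2) ≤ P * B :=
    mul_le_mul_of_nonneg_left h5 hPpos.le
  nlinarith [h6]
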